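/- Let A be n×n symmetric positive semidefinite with partial Cholesky Πᵀ A Π = L Lᵀ + [[0,0],[0,S]]. Then trace(Πᵀ A Π − L Lᵀ) = trace(S) ≥ 0, and trace(S) ≥ Σ_{j=k+1}^{n} λ_j(A). -/

import Mathlib

open Matrix

/-- The `j`-th largest eigenvalue (0-based index `j`) of a Hermitian matrix. -/
noncomputable def eigDesc {n : ℕ} {A : Matrix (Fin n) (Fin n) ℝ} (hA : A.IsHermitian)
    (j : Fin n) : ℝ :=
  (hA.eigenvalues ∘ Tuple.sort hA.eigenvalues) j.rev

/-- The spectral norm (largest singular value) of a real matrix. -/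
noncomputable def specNorm {m n : ℕ} (X : Matrix (Fin m) (Fin n) ℝ) : ℝ :=
  Real.sqrt (⨆ j, (by simpa using Matrix.isHermitian_conjTranspose_mul_self X : (Xᵀ * X).IsHermitian).eigenvalues j)

/-- The `j`-th largest singular value (0-based index `j`) of a real matrix. -/
noncomputable def sval {m k : ℕ} (X : Matrix (Fin m) (Fin k) ℝ) (j : Fin k) : ℝ :=
  Real.sqrt (eigDesc (by simpa using Matrix.isHermitian_conjTranspose_mul_self X : (Xᵀ * X).IsHermitian) j)


namespace PCholAux

lemma conjT_eq {m n : ℕ} (M : Matrix (Fin m) (Fin n) ℝ) : Mᴴ = Mᵀ := by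
  ext i j; simp [conjTranspose_apply]

lemma psd_diag_nonneg {n : ℕ} {M : Matrix (Fin n) (Fin n) ℝ} (h : M.PosSemidef) (i : Fin n) :
    0 ≤ M i i := h.diag_nonneg

lemma key {n k : ℕ} (M : Matrix (Fin k) (Fin n) ℝ) (d : Fin n → ℝ)
    (hle : (Matrix.diagonal d - Mᵀ * M).PosSemidef) :
    ∃ q : Fin n → ℝ, (∀ i, 0 ≤ q i) ∧ (∀ i, q i ≤ 1) ∧ (∑ i, q i ≤ (k:ℝ)) ∧
      (Mᵀ * M).trace ≤ ∑ i, d i * q i := by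
  have hG : (M * Mᵀ).PosSemidef := by
    have := Matrix.posSemidef_self_mul_conjTranspose M
    rwa [conjT_eq] at this
  set μ : Fin k → ℝ := hG.1.eigenvalues with hμdef
  have hμ0 : ∀ a, 0 ≤ μ a := hG.eigenvalues_nonneg
  set W : Matrix (Fin k) (Fin k) ℝ :=
    (Matrix.IsHermitian.eigenvectorUnitary hG.1 : Matrix (Fin k) (Fin k) ℝ) with hWdef
  have hWW : W * Wᵀ = 1 := by
    have := (Matrix.IsHermitian.eigenvectorUnitary hG.1).2
    rw [Matrix.mem_unitaryGroup_iff] at this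
    rwa [Matrix.star_eq_conjTranspose, conjT_eq] at this
  have hdiag : Wᵀ * (M * Mᵀ) * W = Matrix.diagonal μ := by
    have := hG.1.conjStarAlgAut_star_eigenvectorUnitary
    rwa [Unitary.conjStarAlgAut_star_apply, Matrix.star_eq_conjTranspose, conjT_eq] at this
  set N : Matrix (Fin k) (Fin n) ℝ := Wᵀ * M with hNdef
  have hNN : N * Nᵀ = Matrix.diagonal μ := by
    rw [hNdef, Matrix.transpose_mul, Matrix.transpose_transpose, ← hdiag]
    simp only [Matrix.mul_assoc]
  have hX : Nᵀ * N = Mᵀ * M := by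
    rw [hNdef, Matrix.transpose_mul, Matrix.transpose_transpose]
    calc Mᵀ * W * (Wᵀ * M) = Mᵀ * (W * Wᵀ) * M := by simp only [Matrix.mul_assoc]
    _ = Mᵀ * M := by rw [hWW, Matrix.mul_one]
  have hrowmul : ∀ a b, ∑ i, N a i * N b i = Matrix.diagonal μ a b := by
    intro a b
    have := congrFun (congrFun hNN a) b
    simpa [Matrix.mul_apply, Matrix.transpose_apply] using this
  have hrow : ∀ a, ∑ i, (N a i)^2 = μ a := by
    intro a
    have := hrowmul a a
    simpa [sq, Matrix.diagonal_apply_eq] using this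
  set s : Fin k → ℝ := fun a => if μ a = 0 then 0 else (μ a)⁻¹ with hsdef
  have hs0 : ∀ a, 0 ≤ s a := by
    intro a; simp only [hsdef]
    split
    · exact le_refl 0
    · exact inv_nonneg.mpr (hμ0 a)
  have hsμ1 : ∀ a, s a * μ a ≤ 1 := by
    intro a; simp only [hsdef]
    split
    · simp
    · rw [inv_mul_cancel₀ (by assumption)]
  have hsμμ : ∀ a, s a * (μ a * μ a) = μ a := by
    intro a
    rcases eq_or_ne (μ a) 0 with h | h
    · simp [hsdef, h]
    · simp only [hsdef]; rw [if_neg h, ← mul_assoc, inv_mul_cancel₀ h, one_mul]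
  set q : Fin n → ℝ := fun i => ∑ a, s a * (N a i)^2 with hqdef
  have hq0 : ∀ i, 0 ≤ q i := by
    intro i
    exact Finset.sum_nonneg fun a _ => mul_nonneg (hs0 a) (sq_nonneg _)
  have hqsum : ∑ i, q i ≤ (k:ℝ) := by
    simp only [hqdef]
    rw [Finset.sum_comm]
    calc ∑ a, ∑ i, s a * (N a i)^2 = ∑ a : Fin k, s a * μ a := by
          refine Finset.sum_congr rfl fun a _ => ?_
          rw [← Finset.mul_sum, hrow a]
    _ ≤ ∑ _a : Fin k, (1:ℝ) := Finset.sum_le_sum fun a _ => hsμ1 a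
    _ = (k:ℝ) := by simp
  have hrowineq : ∀ a, μ a * μ a ≤ ∑ i, d i * (N a i)^2 := by
    intro a
    have h0 := hle.dotProduct_mulVec_nonneg (fun i => N a i)
    rw [Matrix.sub_mulVec, dotProduct_sub] at h0
    have h1 : star (fun i => N a i) = fun i => N a i := by
      funext i; simp
    rw [h1] at h0
    have h2 : dotProduct (fun i => N a i) (Matrix.diagonal d *ᵥ fun i => N a i)
        = ∑ i, d i * (N a i)^2 := by
      simp only [dotProduct, Matrix.mulVec_diagonal]
      exact Finset.sum_congr rfl fun i _ => by ring
    have h3 : dotProduct (fun i => N a i) ((Mᵀ * M) *ᵥ fun i => N a i) = μ a * μ a := by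
      rw [← hX]
      have hNv : N *ᵥ (fun i => N a i) = fun b => Matrix.diagonal μ b a := by
        funext b
        simp only [Matrix.mulVec, dotProduct]
        exact hrowmul b a
      rw [← Matrix.mulVec_mulVec, Matrix.dotProduct_mulVec, Matrix.vecMul_transpose, hNv]
      simp [dotProduct, Matrix.diagonal_apply, ite_mul, mul_ite]
    rw [h2, h3] at h0
    linarith
  have htrace : (Mᵀ * M).trace ≤ ∑ i, d i * q i := by
    have htr : (Mᵀ * M).trace = ∑ a, μ a := by
      rw [← hX]
      have : (Nᵀ * N).trace = ∑ i, ∑ a, (N a i)^2 := by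
        simp [Matrix.trace, Matrix.diag, Matrix.mul_apply, sq]
      rw [this, Finset.sum_comm]
      exact Finset.sum_congr rfl fun a _ => hrow a
    rw [htr]
    have hswap : ∑ i, d i * q i = ∑ a, s a * ∑ i, d i * (N a i)^2 := by
      simp only [hqdef]
      calc ∑ i, d i * ∑ a, s a * (N a i)^2
          = ∑ i, ∑ a, s a * (d i * (N a i)^2) := by
            refine Finset.sum_congr rfl fun i _ => ?_
            rw [Finset.mul_sum]
            exact Finset.sum_congr rfl fun a _ => by ring
        _ = ∑ a, ∑ i, s a * (d i * (N a i)^2) := Finset.sum_comm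
        _ = ∑ a, s a * ∑ i, d i * (N a i)^2 := by
            exact Finset.sum_congr rfl fun a _ => by rw [Finset.mul_sum]
    rw [hswap]
    refine Finset.sum_le_sum fun a _ => ?_
    calc μ a = s a * (μ a * μ a) := (hsμμ a).symm
    _ ≤ s a * ∑ i, d i * (N a i)^2 := mul_le_mul_of_nonneg_left (hrowineq a) (hs0 a)
  -- q i ≤ 1
  set t : Fin k → ℝ := fun a => Real.sqrt (s a) with htdef
  have ht2 : ∀ a, t a * t a = s a := fun a => Real.mul_self_sqrt (hs0 a)
  set P : Matrix (Fin k) (Fin n) ℝ := Matrix.of (fun a i => t a * N a i) with hPdef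
  have hPP : P * Pᵀ = Matrix.diagonal (fun a => s a * μ a) := by
    ext a b
    simp only [hPdef, Matrix.mul_apply, Matrix.transpose_apply, Matrix.of_apply]
    rcases eq_or_ne a b with rfl | hab
    · rw [Matrix.diagonal_apply_eq]
      have hterm : ∀ i, t a * N a i * (t a * N a i) = (t a * t a) * (N a i * N a i) :=
        fun i => by ring
      rw [Finset.sum_congr rfl (fun i _ => hterm i), ← Finset.mul_sum, hrowmul a a,
        Matrix.diagonal_apply_eq, ht2]
    · rw [Matrix.diagonal_apply_ne _ hab]
      have hz := hrowmul a b
      rw [Matrix.diagonal_apply_ne _ hab] at hz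
      have hterm : ∀ i, t a * N a i * (t b * N b i) = (t a * t b) * (N a i * N b i) :=
        fun i => by ring
      rw [Finset.sum_congr rfl (fun i _ => hterm i), ← Finset.mul_sum, hz, mul_zero]
  have hRdiag : ∀ i, (Pᵀ * P) i i = q i := by
    intro i
    simp only [hqdef, hPdef, Matrix.mul_apply, Matrix.transpose_apply, Matrix.of_apply]
    exact Finset.sum_congr rfl fun a _ => by rw [← ht2 a]; ring
  have hRsymm : ∀ i j, (Pᵀ * P) j i = (Pᵀ * P) i j := by
    intro i j
    simp only [Matrix.mul_apply, Matrix.transpose_apply]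
    exact Finset.sum_congr rfl fun a _ => by ring
  have hdiffPSD : ((Pᵀ * P) - (Pᵀ * P) * (Pᵀ * P)).PosSemidef := by
    have h1 : (Pᵀ * P) * (Pᵀ * P) = Pᵀ * (P * Pᵀ) * P := by simp only [Matrix.mul_assoc]
    have h2 : (Pᵀ * P) - Pᵀ * (P * Pᵀ) * P
        = Pᵀ * (Matrix.diagonal (fun a => 1 - s a * μ a)) * P := by
      rw [hPP]
      have hd1 : Matrix.diagonal (fun a : Fin k => 1 - s a * μ a)
          = 1 - Matrix.diagonal (fun a => s a * μ a) := by
        rw [← Matrix.diagonal_one, Matrix.diagonal_sub]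
      rw [hd1, Matrix.mul_sub, Matrix.sub_mul, Matrix.mul_one]
    have hdg : (Matrix.diagonal (fun a : Fin k => 1 - s a * μ a)).PosSemidef := by
      refine Matrix.PosSemidef.diagonal (Pi.le_def.mpr fun a => ?_)
      simp only [Pi.zero_apply]
      linarith [hsμ1 a]
    have h3 := hdg.conjTranspose_mul_mul_same P
    rw [conjT_eq] at h3
    rw [h1, h2]
    exact h3
  have hq1 : ∀ i, q i ≤ 1 := by
    intro i
    have h0 : 0 ≤ ((Pᵀ * P) - (Pᵀ * P) * (Pᵀ * P)) i i := psd_diag_nonneg hdiffPSD i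
    rw [Matrix.sub_apply] at h0
    have hsq : ((Pᵀ * P) i i)^2 ≤ ((Pᵀ * P) * (Pᵀ * P)) i i := by
      rw [Matrix.mul_apply]
      have hnn : ∀ j ∈ Finset.univ, 0 ≤ (Pᵀ * P) i j * (Pᵀ * P) j i := by
        intro j _
        rw [hRsymm i j]
        exact mul_self_nonneg _
      have := Finset.single_le_sum hnn (Finset.mem_univ i)
      calc ((Pᵀ * P) i i)^2 = (Pᵀ * P) i i * (Pᵀ * P) i i := sq _
      _ ≤ _ := this
    have hqi : (Pᵀ * P) i i = q i := hRdiag i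
    nlinarith [hq0 i]
  exact ⟨q, hq0, hq1, hqsum, htrace⟩


lemma sum_mul_le {k m : ℕ} (μ q : Fin (k+m) → ℝ) (hmono : Antitone μ) (hμ0 : ∀ i, 0 ≤ μ i)
    (hq0 : ∀ i, 0 ≤ q i) (hq1 : ∀ i, q i ≤ 1) (hqs : ∑ i, q i ≤ (k:ℝ)) :
    ∑ i, μ i * q i ≤ ∑ j : Fin k, μ (Fin.castAdd m j) := by
  rcases Nat.eq_zero_or_pos k with hk | hk
  · subst hk
    have hsum0 : ∑ i, q i = 0 :=
      le_antisymm (by simpa using hqs) (Finset.sum_nonneg fun i _ => hq0 i)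
    have hz := (Finset.sum_eq_zero_iff_of_nonneg (fun i _ => hq0 i)).mp hsum0
    have : ∀ i, q i = 0 := fun i => hz i (Finset.mem_univ i)
    simp [this]
  · set t : ℝ := μ (Fin.castAdd m ⟨k-1, by omega⟩) with htdef
    have ht0 : 0 ≤ t := hμ0 _
    have htle : ∀ j : Fin k, t ≤ μ (Fin.castAdd m j) := by
      intro j
      refine hmono ?_
      simp only [Fin.le_def, Fin.coe_castAdd]
      omega
    have htge : ∀ j : Fin m, μ (Fin.natAdd k j) ≤ t := by
      intro j
      refine hmono ?_
      simp only [Fin.le_def, Fin.coe_castAdd, Fin.coe_natAdd]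
      omega
    rw [Fin.sum_univ_add (f := fun i => μ i * q i)]
    have h1 : ∑ j : Fin k, μ (Fin.castAdd m j) * q (Fin.castAdd m j)
        ≤ ∑ j : Fin k, (μ (Fin.castAdd m j) + t * q (Fin.castAdd m j) - t) := by
      refine Finset.sum_le_sum fun j _ => ?_
      have ha := htle j
      have hb := hq1 (Fin.castAdd m j)
      nlinarith [hq0 (Fin.castAdd m j)]
    have h2 : ∑ j : Fin m, μ (Fin.natAdd k j) * q (Fin.natAdd k j)
        ≤ ∑ j : Fin m, t * q (Fin.natAdd k j) := by
      refine Finset.sum_le_sum fun j _ => ?_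
      exact mul_le_mul_of_nonneg_right (htge j) (hq0 _)
    have e1 : ∑ j : Fin k, (μ (Fin.castAdd m j) + t * q (Fin.castAdd m j) - t)
        = (∑ j : Fin k, μ (Fin.castAdd m j)) + t * (∑ j : Fin k, q (Fin.castAdd m j)) - t * k := by
      rw [Finset.sum_sub_distrib, Finset.sum_add_distrib, ← Finset.mul_sum]
      simp [Finset.card_univ, mul_comm]
    have e2 : ∑ j : Fin m, t * q (Fin.natAdd k j) = t * ∑ j : Fin m, q (Fin.natAdd k j) :=
      (Finset.mul_sum _ _ _).symm
    have hqsplit : ∑ j : Fin k, q (Fin.castAdd m j) + ∑ j : Fin m, q (Fin.natAdd k j)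
        = ∑ i, q i := (Fin.sum_univ_add (f := q)).symm
    have hneg : t * ((∑ i, q i) - k) ≤ 0 :=
      mul_nonpos_of_nonneg_of_nonpos ht0 (by linarith)
    have hdist : t * ((∑ i, q i) - k)
        = t * (∑ j : Fin k, q (Fin.castAdd m j)) + t * (∑ j : Fin m, q (Fin.natAdd k j)) - t * k := by
      rw [← hqsplit]; ring
    linarith

lemma trace_reindex_fromBlocks {k m : ℕ} (S : Matrix (Fin m) (Fin m) ℝ) :
    ((Matrix.reindex finSumFinEquiv finSumFinEquiv)
      (Matrix.fromBlocks (0 : Matrix (Fin k) (Fin k) ℝ) 0 0 S)).trace = S.trace := by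
  simp only [Matrix.trace, Matrix.diag, Matrix.reindex_apply, Matrix.submatrix_apply]
  rw [← Equiv.sum_comp finSumFinEquiv
    (fun x => Matrix.fromBlocks 0 0 0 S (finSumFinEquiv.symm x) (finSumFinEquiv.symm x))]
  simp [Fintype.sum_sum_type, Matrix.fromBlocks]

lemma psd_fromBlocks {k m : ℕ} {S : Matrix (Fin m) (Fin m) ℝ} (hS : S.PosSemidef) :
    (Matrix.fromBlocks (0 : Matrix (Fin k) (Fin k) ℝ) 0 0 S).PosSemidef := by
  refine Matrix.PosSemidef.of_dotProduct_mulVec_nonneg ?_ ?_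
  · have : (Matrix.fromBlocks (0 : Matrix (Fin k) (Fin k) ℝ) 0 0 S)ᴴ
        = Matrix.fromBlocks 0 0 0 Sᴴ := by
      rw [Matrix.fromBlocks_conjTranspose]; simp
    rw [Matrix.IsHermitian, this, hS.1.eq]
  · intro x
    rw [Matrix.fromBlocks_mulVec]
    simp only [Matrix.zero_mulVec, zero_add, add_zero]
    have := hS.dotProduct_mulVec_nonneg (x ∘ Sum.inr)
    simpa [dotProduct, Fintype.sum_sum_type] using this

lemma psd_reindex {k m : ℕ} {S : Matrix (Fin m) (Fin m) ℝ} (hS : S.PosSemidef) :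
    ((Matrix.reindex finSumFinEquiv finSumFinEquiv)
      (Matrix.fromBlocks (0 : Matrix (Fin k) (Fin k) ℝ) 0 0 S)).PosSemidef := by
  rw [Matrix.reindex_apply]
  exact (psd_fromBlocks hS).submatrix _

lemma perm_mul_transpose {n : ℕ} (σ : Equiv.Perm (Fin n)) :
    σ.permMatrix ℝ * (σ.permMatrix ℝ)ᵀ = 1 := by
  rw [← PEquiv.toMatrix_symm, ← Equiv.toPEquiv_symm, ← PEquiv.toMatrix_trans,
    ← Equiv.toPEquiv_trans]
  simp
lemma transpose_mul_perm {n : ℕ} (σ : Equiv.Perm (Fin n)) :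
    (σ.permMatrix ℝ)ᵀ * σ.permMatrix ℝ = 1 := by
  rw [← PEquiv.toMatrix_symm, ← Equiv.toPEquiv_symm, ← PEquiv.toMatrix_trans,
    ← Equiv.toPEquiv_trans]
  simp

end PCholAux

open PCholAux in
/-- For a partial Cholesky `Πᵀ A Π = L Lᵀ + [[0,0],[0,S]]` of a symmetric
positive semidefinite `A`: `trace(Πᵀ A Π − L Lᵀ) = trace S ≥ 0`, and
`trace S ≥ Σ_{j=k+1}^{n} λ_j(A)`. -/
theorem partial_cholesky_trace_bounds {k m : ℕ}
    (A : Matrix (Fin (k + m)) (Fin (k + m)) ℝ) (hA : A.PosSemidef)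
    (σ : Equiv.Perm (Fin (k + m)))
    (L : Matrix (Fin (k + m)) (Fin k) ℝ)
    (S : Matrix (Fin m) (Fin m) ℝ) (hS : S.PosSemidef)
    (hfact : (σ.permMatrix ℝ)ᵀ * A * σ.permMatrix ℝ =
      L * Lᵀ + (Matrix.reindex finSumFinEquiv finSumFinEquiv) (Matrix.fromBlocks 0 0 0 S)) :
    ((σ.permMatrix ℝ)ᵀ * A * σ.permMatrix ℝ - L * Lᵀ).trace = S.trace ∧
    0 ≤ S.trace ∧
    ∑ j : Fin m, eigDesc hA.isHermitian (Fin.natAdd k j) ≤ S.trace := by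
  set Pm : Matrix (Fin (k+m)) (Fin (k+m)) ℝ := σ.permMatrix ℝ with hPmdef
  have hP1 : Pm * Pmᵀ = 1 := perm_mul_transpose σ
  have hP2 : Pmᵀ * Pm = 1 := transpose_mul_perm σ
  have hdiff : Pmᵀ * A * Pm - L * Lᵀ
      = (Matrix.reindex finSumFinEquiv finSumFinEquiv) (Matrix.fromBlocks 0 0 0 S) := by
    rw [hfact, add_sub_cancel_left]
  -- Part 1
  have part1 : (Pmᵀ * A * Pm - L * Lᵀ).trace = S.trace := by
    rw [hdiff, trace_reindex_fromBlocks]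
  -- Part 2
  have part2 : 0 ≤ S.trace :=
    Finset.sum_nonneg fun i _ => psd_diag_nonneg hS i
  refine ⟨part1, part2, ?_⟩
  -- Part 3
  have hBL : (Pmᵀ * A * Pm - L * Lᵀ).PosSemidef := by
    rw [hdiff]; exact psd_reindex hS
  set d : Fin (k+m) → ℝ := hA.isHermitian.eigenvalues with hddef
  have hd0 : ∀ i, 0 ≤ d i := hA.eigenvalues_nonneg
  set U : Matrix (Fin (k+m)) (Fin (k+m)) ℝ :=
    (Matrix.IsHermitian.eigenvectorUnitary hA.isHermitian : Matrix (Fin (k+m)) (Fin (k+m)) ℝ)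
    with hUdef
  have hUU : U * Uᵀ = 1 := by
    have := (Matrix.IsHermitian.eigenvectorUnitary hA.isHermitian).2
    rw [Matrix.mem_unitaryGroup_iff] at this
    rwa [Matrix.star_eq_conjTranspose, conjT_eq] at this
  have hU : Uᵀ * A * U = Matrix.diagonal d := by
    have := hA.isHermitian.conjStarAlgAut_star_eigenvectorUnitary
    rwa [Unitary.conjStarAlgAut_star_apply, Matrix.star_eq_conjTranspose, conjT_eq] at this
  set M : Matrix (Fin k) (Fin (k+m)) ℝ := Lᵀ * Pmᵀ * U with hMdef
  have hMtM : Mᵀ * M = Uᵀ * (Pm * (L * Lᵀ) * Pmᵀ) * U := by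
    rw [hMdef]
    simp only [Matrix.transpose_mul, Matrix.transpose_transpose, Matrix.mul_assoc]
  have hPBP : Pm * (Pmᵀ * A * Pm - L * Lᵀ) * Pmᵀ = A - Pm * (L * Lᵀ) * Pmᵀ := by
    rw [Matrix.mul_sub, Matrix.sub_mul]
    congr 1
    calc Pm * (Pmᵀ * A * Pm) * Pmᵀ = (Pm * Pmᵀ) * A * (Pm * Pmᵀ) := by
          simp only [Matrix.mul_assoc]
    _ = A := by rw [hP1, Matrix.one_mul, Matrix.mul_one]
  have hDsub : Matrix.diagonal d - Mᵀ * M = Uᵀ * (Pm * (Pmᵀ * A * Pm - L * Lᵀ) * Pmᵀ) * U := by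
    rw [hPBP, Matrix.mul_sub, Matrix.sub_mul, hU, hMtM]
  have hPSD : (Matrix.diagonal d - Mᵀ * M).PosSemidef := by
    rw [hDsub]
    have h1 := hBL.mul_mul_conjTranspose_same Pm
    rw [conjT_eq] at h1
    have h2 := h1.conjTranspose_mul_mul_same U
    rwa [conjT_eq] at h2
  obtain ⟨q, hq0, hq1, hqs, hqt⟩ := key M d hPSD
  -- trace identities
  have htraceM : (Mᵀ * M).trace = (L * Lᵀ).trace := by
    have hMMt : M * Mᵀ = Lᵀ * L := by
      rw [hMdef]
      calc Lᵀ * Pmᵀ * U * (Lᵀ * Pmᵀ * U)ᵀ = Lᵀ * (Pmᵀ * ((U * Uᵀ) * (Pm * L))) := by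
            simp only [Matrix.transpose_mul, Matrix.transpose_transpose, Matrix.mul_assoc]
      _ = Lᵀ * ((Pmᵀ * Pm) * L) := by rw [hUU, Matrix.one_mul]; simp only [Matrix.mul_assoc]
      _ = Lᵀ * L := by rw [hP2, Matrix.one_mul]
    rw [Matrix.trace_mul_comm, hMMt, Matrix.trace_mul_comm]
  have htraceA : A.trace = ∑ i, d i := by
    have h1 : (Uᵀ * A * U).trace = A.trace := by
      rw [Matrix.trace_mul_comm (Uᵀ * A) U, ← Matrix.mul_assoc, hUU, Matrix.one_mul]
    rw [← h1, hU, Matrix.trace_diagonal]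
  have htraceB : (Pmᵀ * A * Pm).trace = A.trace := by
    rw [Matrix.trace_mul_comm (Pmᵀ * A) Pm, ← Matrix.mul_assoc, hP1, Matrix.one_mul]
  -- eigDesc
  set π : Equiv.Perm (Fin (k+m)) := Tuple.sort hA.isHermitian.eigenvalues with hπdef
  set e : Equiv.Perm (Fin (k+m)) := (Fin.revPerm : Equiv.Perm (Fin (k+m))).trans π with hedef
  have heig : ∀ j, eigDesc hA.isHermitian j = d (e j) := by
    intro j; rfl
  have hanti : Antitone (eigDesc hA.isHermitian) := by
    intro a b hab
    have hmono := Tuple.monotone_sort hA.isHermitian.eigenvalues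
    have : (hA.isHermitian.eigenvalues ∘ π) b.rev ≤ (hA.isHermitian.eigenvalues ∘ π) a.rev :=
      hmono (by rwa [Fin.rev_le_rev])
    simpa [eigDesc, hπdef] using this
  have heig0 : ∀ j, 0 ≤ eigDesc hA.isHermitian j := fun j => by rw [heig]; exact hd0 _
  have hsum1 : ∑ i, d i * q i = ∑ j, eigDesc hA.isHermitian j * q (e j) := by
    rw [← Equiv.sum_comp e (fun i => d i * q i)]
    exact Finset.sum_congr rfl fun j _ => by rw [heig]
  have hsum2 : ∑ j, q (e j) = ∑ i, q i := Equiv.sum_comp e q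
  have hkey2 : ∑ j, eigDesc hA.isHermitian j * q (e j)
      ≤ ∑ j : Fin k, eigDesc hA.isHermitian (Fin.castAdd m j) := by
    refine sum_mul_le _ _ hanti heig0 (fun i => hq0 _) (fun i => hq1 _) ?_
    rw [hsum2]; exact hqs
  have hsumall : ∑ j, eigDesc hA.isHermitian j = ∑ i, d i := by
    rw [← Equiv.sum_comp e d]
    exact Finset.sum_congr rfl fun j _ => (heig j).symm
  have hsplit : ∑ j, eigDesc hA.isHermitian j
      = ∑ j : Fin k, eigDesc hA.isHermitian (Fin.castAdd m j)
        + ∑ j : Fin m, eigDesc hA.isHermitian (Fin.natAdd k j) :=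
    Fin.sum_univ_add (f := eigDesc hA.isHermitian)
  have htrS : S.trace = A.trace - (L * Lᵀ).trace := by
    rw [← part1, Matrix.trace_sub, htraceB]
  rw [htrS, htraceA]
  have := hqt
  rw [htraceM] at this
  linarith [hsum1 ▸ this, hkey2, hsumall ▸ hsplit]
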